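/- Let 𝔫' be ℂ⁴ regarded as a real Lie algebra with bracket [a,b] = (0, (i/2)(a₁b̄₁ − ā₁b₁), 0, (i/2)(a₃b̄₃ − ā₃b₃)), and let λ(z₁,z₂,z₃,z₄) = (ξz₃, z₄, ξz₁, z₂). Then the real vector space of closed ℝ-linear functionals α : 𝔫' → ℝ has dimension 6, and its subspace consisting of those closed functionals that additionally satisfy α ∘ λ = α has dimension 1 and is spanned by the functional (z₁,z₂,z₃,z₄) ↦ Im(z₂ + z₄). (This computes b₁ = 6 for the associated nilmanifold M and b₁ = 1 for the quotient orbifold M/G and its strong KT resolution.) -/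

import Mathlib

/-- The Lie bracket on `𝔫' = ℂ⁴`:
`[a,b] = (0, (i/2)(a₁b̄₁ − ā₁b₁), 0, (i/2)(a₃b̄₃ − ā₃b₃))`. -/
noncomputable def nBr (a b : ℂ × ℂ × ℂ × ℂ) : ℂ × ℂ × ℂ × ℂ :=
  (0, Complex.I / 2 * (a.1 * (starRingEnd ℂ) b.1 - (starRingEnd ℂ) a.1 * b.1), 0,
   Complex.I / 2 * (a.2.2.1 * (starRingEnd ℂ) b.2.2.1 - (starRingEnd ℂ) a.2.2.1 * b.2.2.1))

/-- The primitive cube root of unity `ξ = e^{2πi/3}`. -/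
noncomputable def xi : ℂ := Complex.exp (2 * Real.pi * Complex.I / 3)

/-- The map `λ(z₁,z₂,z₃,z₄) = (ξz₃, z₄, ξz₁, z₂)`. -/
noncomputable def lam (z : ℂ × ℂ × ℂ × ℂ) : ℂ × ℂ × ℂ × ℂ :=
  (xi * z.2.2.1, z.2.2.2, xi * z.1, z.2.1)

/-- The real vector space of closed `ℝ`-linear functionals on `𝔫'`, i.e. those vanishing on
all brackets. -/
noncomputable def closedFunctionals : Submodule ℝ ((ℂ × ℂ × ℂ × ℂ) →ₗ[ℝ] ℝ) where
  carrier := {α | ∀ a b : ℂ × ℂ × ℂ × ℂ, α (nBr a b) = 0}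
  add_mem' := fun hα hβ a b => by
    simp only [LinearMap.add_apply, hα a b, hβ a b, add_zero]
  zero_mem' := fun a b => rfl
  smul_mem' := fun c α hα a b => by
    simp only [LinearMap.smul_apply, hα a b, smul_zero]

/-- The real vector space of closed `ℝ`-linear functionals on `𝔫'` that are furthermore
invariant under `λ`. -/
noncomputable def invClosedFunctionals : Submodule ℝ ((ℂ × ℂ × ℂ × ℂ) →ₗ[ℝ] ℝ) where
  carrier := {α | (∀ a b : ℂ × ℂ × ℂ × ℂ, α (nBr a b) = 0) ∧
    ∀ z : ℂ × ℂ × ℂ × ℂ, α (lam z) = α z}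
  add_mem' := fun hα hβ =>
    ⟨fun a b => by simp only [LinearMap.add_apply, hα.1 a b, hβ.1 a b, add_zero],
     fun z => by simp only [LinearMap.add_apply, hα.2 z, hβ.2 z]⟩
  zero_mem' := ⟨fun a b => rfl, fun z => rfl⟩
  smul_mem' := fun c α hα =>
    ⟨fun a b => by simp only [LinearMap.smul_apply, hα.1 a b, smul_zero],
     fun z => by simp only [LinearMap.smul_apply, hα.2 z]⟩

/-- The `ℝ`-linear functional `(z₁,z₂,z₃,z₄) ↦ Im (z₂ + z₄)` on `ℂ⁴`. -/
noncomputable def imZ2Z4 : (ℂ × ℂ × ℂ × ℂ) →ₗ[ℝ] ℝ where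
  toFun z := (z.2.1 + z.2.2.2).im
  map_add' a b := by simp; ring
  map_smul' c a := by simp; ring

/- ### auxiliary lemmas -/

lemma xi_cube : xi ^ 3 = 1 := by
  rw [xi, ← Complex.exp_nat_mul]
  rw [show (3:ℕ) * (2 * Real.pi * Complex.I / 3) = 2 * Real.pi * Complex.I by push_cast; ring]
  exact Complex.exp_two_pi_mul_I

lemma xi_ne_one : xi ≠ 1 := by
  have him : xi.im = Real.sin (2 * Real.pi / 3) := by
    rw [xi, show 2 * Real.pi * Complex.I / 3 = (2 * Real.pi / 3 : ℝ) * Complex.I by push_cast; ring,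
      Complex.exp_ofReal_mul_I_im]
  intro h
  rw [h] at him
  have : Real.sin (2 * Real.pi / 3) > 0 :=
    Real.sin_pos_of_pos_of_lt_pi (by positivity) (by nlinarith [Real.pi_pos])
  simp [Complex.one_im] at him
  linarith

lemma xi_sum : 1 + xi + xi ^ 2 = 0 := by
  have h : (xi - 1) * (xi ^ 2 + xi + 1) = 0 := by linear_combination xi_cube
  rcases mul_eq_zero.mp h with h | h
  · exact absurd (sub_eq_zero.mp h) xi_ne_one
  · linear_combination h

lemma real_part (w u : ℂ) :
    (Complex.I / 2 * (w * (starRingEnd ℂ) u - (starRingEnd ℂ) w * u)).im = 0 := by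
  simp [Complex.div_im, Complex.div_re, Complex.mul_im, Complex.mul_re, Complex.normSq_apply]

lemma nBr_eval1 : nBr ((1:ℂ),0,0,0) (Complex.I,0,0,0) = (0,1,0,0) := by
  simp [nBr, Complex.ext_iff]; norm_num
lemma nBr_eval2 : nBr ((0:ℂ),0,1,0) (0,0,Complex.I,0) = (0,0,0,1) := by
  simp [nBr, Complex.ext_iff]; norm_num

lemma closed_of (α : (ℂ × ℂ × ℂ × ℂ) →ₗ[ℝ] ℝ) (h1 : α (0,1,0,0) = 0) (h2 : α (0,0,0,1) = 0)
    (a b : ℂ × ℂ × ℂ × ℂ) : α (nBr a b) = 0 := by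
  have hdecomp : nBr a b =
      (Complex.I / 2 * (a.1 * (starRingEnd ℂ) b.1 - (starRingEnd ℂ) a.1 * b.1)).re
        • ((0:ℂ),(1:ℂ),(0:ℂ),(0:ℂ)) +
      (Complex.I / 2 * (a.2.2.1 * (starRingEnd ℂ) b.2.2.1 - (starRingEnd ℂ) a.2.2.1 * b.2.2.1)).re
        • ((0:ℂ),(0:ℂ),(0:ℂ),(1:ℂ)) := by
    simp [nBr, Prod.ext_iff, Complex.ext_iff, Complex.real_smul,
      real_part a.1 b.1, real_part a.2.2.1 b.2.2.1]
  rw [hdecomp, map_add, map_smul, map_smul, h1, h2]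
  simp

lemma closed_iff (α : (ℂ × ℂ × ℂ × ℂ) →ₗ[ℝ] ℝ) :
    (∀ a b : ℂ × ℂ × ℂ × ℂ, α (nBr a b) = 0) ↔ α (0,1,0,0) = 0 ∧ α (0,0,0,1) = 0 := by
  constructor
  · intro h
    exact ⟨by rw [← nBr_eval1]; exact h _ _, by rw [← nBr_eval2]; exact h _ _⟩
  · intro ⟨h1, h2⟩
    exact closed_of α h1 h2

noncomputable def reZ2 : (ℂ × ℂ × ℂ × ℂ) →ₗ[ℝ] ℝ where
  toFun z := z.2.1.re
  map_add' a b := by simp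
  map_smul' c a := by simp [Complex.smul_re]

noncomputable def reZ4 : (ℂ × ℂ × ℂ × ℂ) →ₗ[ℝ] ℝ where
  toFun z := z.2.2.2.re
  map_add' a b := by simp
  map_smul' c a := by simp [Complex.smul_re]

noncomputable def evalE : ((ℂ × ℂ × ℂ × ℂ) →ₗ[ℝ] ℝ) →ₗ[ℝ] ℝ × ℝ :=
  (LinearMap.applyₗ ((0:ℂ),(1:ℂ),(0:ℂ),(0:ℂ))).prod (LinearMap.applyₗ ((0:ℂ),(0:ℂ),(0:ℂ),(1:ℂ)))

lemma closed_dim : Module.finrank ℝ closedFunctionals = 6 := by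
  have hker : closedFunctionals = LinearMap.ker evalE := by
    ext α
    rw [show α ∈ closedFunctionals ↔ ∀ a b : ℂ × ℂ × ℂ × ℂ, α (nBr a b) = 0 from Iff.rfl,
      closed_iff]
    simp [evalE, LinearMap.mem_ker, Prod.ext_iff]
  have hsurj : Function.Surjective evalE := by
    intro ⟨x, y⟩
    refine ⟨x • reZ2 + y • reZ4, ?_⟩
    simp [evalE, reZ2, reZ4]
  have h := LinearMap.finrank_range_add_finrank_ker evalE
  rw [LinearMap.range_eq_top.mpr hsurj] at h
  simp [Module.finrank_linearMap, Complex.finrank_real_complex] at h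
  rw [hker]
  omega

lemma imZ2Z4_mem : imZ2Z4 ∈ invClosedFunctionals := by
  constructor
  · intro a b
    have h1 := real_part a.1 b.1
    have h2 := real_part a.2.2.1 b.2.2.1
    simp [imZ2Z4, nBr, h1, h2]
  · intro z
    simp [imZ2Z4, lam]
    ring

lemma inv_eq_span : invClosedFunctionals = Submodule.span ℝ {imZ2Z4} := by
  apply le_antisymm ?_ ?_
  swap
  · rw [Submodule.span_le, Set.singleton_subset_iff]
    exact imZ2Z4_mem
  intro α hα
  obtain ⟨hc, hL⟩ := hα
  have h01 : α (0,1,0,0) = 0 := by rw [← nBr_eval1]; exact hc _ _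
  have h04 : α (0,0,0,1) = 0 := by rw [← nBr_eval2]; exact hc _ _
  have hA : ∀ w : ℂ, α (0,0,xi*w,0) = α (w,0,0,0) := fun w => by
    simpa [lam] using hL (w,0,0,0)
  have hB : ∀ w : ℂ, α (xi*w,0,0,0) = α (0,0,w,0) := fun w => by
    simpa [lam] using hL (0,0,w,0)
  have hg2 : ∀ w : ℂ, α (xi^2*w,0,0,0) = α (w,0,0,0) := fun w => by
    have h := hB (xi*w)
    rw [show xi*(xi*w) = xi^2*w by ring] at h
    rw [h]
    exact hA w
  have hgadd : ∀ a b : ℂ, α (a,0,0,0) + α (b,0,0,0) = α (a+b,0,0,0) := fun a b => by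
    rw [← map_add]
    congr 1
    simp [Prod.ext_iff]
  have hg0 : ∀ w : ℂ, α (w,0,0,0) = 0 := by
    intro w
    have e4 : α (xi^4*w,0,0,0) = α (w,0,0,0) := by
      have h := hg2 (xi^2*w)
      rw [show xi^2*(xi^2*w) = xi^4*w by ring] at h
      rw [h, hg2]
    have key : α (w,0,0,0) + α (xi^2*w,0,0,0) + α (xi^4*w,0,0,0) = 0 := by
      rw [hgadd, hgadd]
      rw [show w + xi^2*w + xi^4*w = 0 by
        linear_combination w * xi_sum + w * xi * xi_cube]
      exact map_zero α
    rw [hg2, e4] at key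
    linarith
  have hh0 : ∀ w : ℂ, α (0,0,w,0) = 0 := fun w => by rw [← hB w, hg0]
  have hC : ∀ w : ℂ, α (0,0,0,w) = α (0,w,0,0) := fun w => by
    simpa [lam] using hL (0,w,0,0)
  set t := α (0, Complex.I, 0, 0) with ht
  have hf2 : ∀ w : ℂ, α (0,w,0,0) = w.im * t := by
    intro w
    have hdec : ((0:ℂ),w,(0:ℂ),(0:ℂ)) =
        w.re • ((0:ℂ),(1:ℂ),(0:ℂ),(0:ℂ)) + w.im • ((0:ℂ),Complex.I,(0:ℂ),(0:ℂ)) := by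
      simp [Prod.ext_iff, Complex.ext_iff, Complex.real_smul]
    rw [hdec, map_add, map_smul, map_smul, h01, ← ht]
    simp
  refine Submodule.mem_span_singleton.mpr ⟨t, ?_⟩
  apply LinearMap.ext
  intro z
  have hdecz : z = ((z.1,0,0,0) + ((0:ℂ),z.2.1,0,0)) +
      (((0:ℂ),(0:ℂ),z.2.2.1,0) + ((0:ℂ),(0:ℂ),(0:ℂ),z.2.2.2)) := by
    simp [Prod.ext_iff]
  rw [show (t • imZ2Z4) z = t * (z.2.1 + z.2.2.2).im from rfl]
  conv_rhs => rw [hdecz]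
  rw [map_add, map_add, map_add, hg0, hh0, hf2, hC, hf2]
  simp [Complex.add_im]
  ring

lemma imZ2Z4_ne_zero : imZ2Z4 ≠ 0 := by
  intro h
  have h1 : imZ2Z4 ((0:ℂ), Complex.I, (0:ℂ), (0:ℂ)) = 1 := by simp [imZ2Z4]
  rw [h] at h1
  simp at h1

/-- The space of closed `ℝ`-linear functionals on the Lie algebra `𝔫'` has dimension `6`, and
its subspace of `λ`-invariant closed functionals has dimension `1`, spanned by
`(z₁,z₂,z₃,z₄) ↦ Im (z₂ + z₄)`.  (This computes `b₁ = 6` for the associated nilmanifold and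
`b₁ = 1` for the quotient orbifold and its strong KT resolution.) -/
theorem closed_functionals_dim_six_invariant_dim_one :
    Module.finrank ℝ closedFunctionals = 6 ∧
    Module.finrank ℝ invClosedFunctionals = 1 ∧
    invClosedFunctionals = Submodule.span ℝ {imZ2Z4} := by
  refine ⟨closed_dim, ?_, inv_eq_span⟩
  rw [inv_eq_span]
  exact finrank_span_singleton imZ2Z4_ne_zero
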